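/- (Interval decomposition lemma, Lemma 7 of Luo–Schapire.) For any sequence of non-negative real numbers v₁, …, v_T, extended by v₀ = v_{T+1} = 0, there exist N ∈ ℕ, a collection of contiguous intervals U₁, …, U_N ⊆ {1,…,T}, and positive weights a₁, …, a_N such that v_t = Σ_{k=1}^{N} a_k · 1[t ∈ U_k] for every t ∈ {1,…,T}, and Σ_{k=1}^{N} a_k = Σ_{t=1}^{T+1} max(v_t − v_{t−1}, 0). -/

import Mathlib

private theorem intdec_zero (T : ℕ) (v : ℕ → ℝ)
    (hz : ∀ t ∈ Finset.Icc 1 T, v t = 0) (h0 : v 0 = 0) (hT1 : v (T + 1) = 0) :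
    ∃ (N : ℕ) (s e : ℕ → ℕ) (a : ℕ → ℝ),
      (∀ k ∈ Finset.Icc 1 N, 0 < a k ∧ 1 ≤ s k ∧ s k ≤ e k ∧ e k ≤ T) ∧
      (∀ t ∈ Finset.Icc 1 T,
        v t = ∑ k ∈ Finset.Icc 1 N,
          a k * (if t ∈ Finset.Icc (s k) (e k) then (1 : ℝ) else 0)) ∧
      ∑ k ∈ Finset.Icc 1 N, a k =
        ∑ t ∈ Finset.Icc 1 (T + 1), max (v t - v (t - 1)) 0 := by
  refine ⟨0, id, id, fun _ => 1, ?_, ?_, ?_⟩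
  · simp
  · intro t ht
    simp [hz t ht]
  · rw [Finset.sum_eq_zero, Finset.sum_eq_zero]
    · intro t ht
      simp only [Finset.mem_Icc] at ht
      have hvt : v t = 0 := by
        rcases Nat.lt_or_ge t (T + 1) with h | h
        · exact hz t (Finset.mem_Icc.mpr ⟨ht.1, by omega⟩)
        · have : t = T + 1 := by omega
          rw [this]; exact hT1
      have hvt1 : v (t - 1) = 0 := by
        rcases Nat.eq_or_lt_of_le ht.1 with h | h
        · rw [← h]; simpa using h0
        · exact hz (t - 1) (Finset.mem_Icc.mpr ⟨by omega, by omega⟩)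
      simp [hvt, hvt1]
    · simp

private theorem intdec_aux : ∀ (n T : ℕ) (v : ℕ → ℝ),
    (∀ t ∈ Finset.Icc 1 T, 0 ≤ v t) → v 0 = 0 → v (T + 1) = 0 →
    ((Finset.Icc 1 T).filter (fun t => 0 < v t)).card ≤ n →
    ∃ (N : ℕ) (s e : ℕ → ℕ) (a : ℕ → ℝ),
      (∀ k ∈ Finset.Icc 1 N, 0 < a k ∧ 1 ≤ s k ∧ s k ≤ e k ∧ e k ≤ T) ∧
      (∀ t ∈ Finset.Icc 1 T,
        v t = ∑ k ∈ Finset.Icc 1 N,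
          a k * (if t ∈ Finset.Icc (s k) (e k) then (1 : ℝ) else 0)) ∧
      ∑ k ∈ Finset.Icc 1 N, a k =
        ∑ t ∈ Finset.Icc 1 (T + 1), max (v t - v (t - 1)) 0 := by
  intro n
  induction n with
  | zero =>
    intro T v hv h0 hT1 hcard
    apply intdec_zero T v _ h0 hT1
    intro t ht
    have : t ∉ (Finset.Icc 1 T).filter (fun t => 0 < v t) := by
      rw [Nat.le_zero, Finset.card_eq_zero] at hcard
      simp [hcard]
    have hnpos : ¬ 0 < v t := by
      intro hp; exact this (Finset.mem_filter.mpr ⟨ht, hp⟩)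
    linarith [hv t ht, hnpos]
  | succ n ih =>
    intro T v hv h0 hT1 hcard
    set S := (Finset.Icc 1 T).filter (fun t => 0 < v t) with hS
    by_cases hSne : S.Nonempty
    swap
    · apply intdec_zero T v _ h0 hT1
      intro t ht
      rw [Finset.not_nonempty_iff_eq_empty] at hSne
      have : t ∉ S := by simp [hSne]
      have hnpos : ¬ 0 < v t := fun hp => this (Finset.mem_filter.mpr ⟨ht, hp⟩)
      linarith [hv t ht, hnpos]
    obtain ⟨t0, ht0⟩ := hSne
    rw [hS, Finset.mem_filter, Finset.mem_Icc] at ht0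
    obtain ⟨⟨ht01, ht0T⟩, ht0pos⟩ := ht0
    -- left endpoint
    set A := (Finset.Icc 1 t0).filter (fun u => ∀ x ∈ Finset.Icc u t0, 0 < v x) with hA
    have hAne : t0 ∈ A := by
      rw [hA, Finset.mem_filter]
      refine ⟨Finset.mem_Icc.mpr ⟨ht01, le_rfl⟩, ?_⟩
      intro x hx
      rw [Finset.mem_Icc] at hx
      have : x = t0 := le_antisymm hx.2 hx.1
      rw [this]; exact ht0pos
    set s := A.min' ⟨t0, hAne⟩ with hsdef
    have hsA : s ∈ A := Finset.min'_mem _ _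
    rw [hA, Finset.mem_filter, Finset.mem_Icc] at hsA
    obtain ⟨⟨hs1, hst0⟩, hposA⟩ := hsA
    have hvs0 : v (s - 1) = 0 := by
      rcases Nat.eq_or_lt_of_le hs1 with h | h
      · rw [← h]; simpa using h0
      · have hnot : s - 1 ∉ A := by
          intro hmem
          have := Finset.min'_le A _ hmem
          omega
        rw [hA, Finset.mem_filter] at hnot
        push_neg at hnot
        have hmem : s - 1 ∈ Finset.Icc 1 t0 := Finset.mem_Icc.mpr ⟨by omega, by omega⟩
        obtain ⟨x, hx, hnx⟩ := hnot hmem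
        rw [Finset.mem_Icc] at hx
        have hxs : x = s - 1 := by
          by_contra hne
          have := hposA x (Finset.mem_Icc.mpr ⟨by omega, hx.2⟩)
          linarith
        rw [hxs] at hnx
        have := hv (s - 1) (Finset.mem_Icc.mpr ⟨by omega, by omega⟩)
        linarith
    -- right endpoint
    set B := (Finset.Icc t0 T).filter (fun u => ∀ x ∈ Finset.Icc t0 u, 0 < v x) with hB
    have hBne : t0 ∈ B := by
      rw [hB, Finset.mem_filter]
      refine ⟨Finset.mem_Icc.mpr ⟨le_rfl, ht0T⟩, ?_⟩
      intro x hx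
      rw [Finset.mem_Icc] at hx
      have : x = t0 := le_antisymm hx.2 hx.1
      rw [this]; exact ht0pos
    set e := B.max' ⟨t0, hBne⟩ with hedef
    have heB : e ∈ B := Finset.max'_mem _ _
    rw [hB, Finset.mem_filter, Finset.mem_Icc] at heB
    obtain ⟨⟨ht0e, heT⟩, hposB⟩ := heB
    have hve0 : v (e + 1) = 0 := by
      rcases Nat.eq_or_lt_of_le heT with h | h
      · rw [h]; exact hT1
      · have hnot : e + 1 ∉ B := by
          intro hmem
          have := Finset.le_max' B _ hmem
          omega
        rw [hB, Finset.mem_filter] at hnot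
        push_neg at hnot
        have hmem : e + 1 ∈ Finset.Icc t0 T := Finset.mem_Icc.mpr ⟨by omega, by omega⟩
        obtain ⟨x, hx, hnx⟩ := hnot hmem
        rw [Finset.mem_Icc] at hx
        have hxe : x = e + 1 := by
          by_contra hne
          have := hposB x (Finset.mem_Icc.mpr ⟨hx.1, by omega⟩)
          linarith
        rw [hxe] at hnx
        have := hv (e + 1) (Finset.mem_Icc.mpr ⟨by omega, by omega⟩)
        linarith
    have hse : s ≤ e := le_trans hst0 ht0e
    have hpos : ∀ x ∈ Finset.Icc s e, 0 < v x := by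
      intro x hx
      rw [Finset.mem_Icc] at hx
      rcases le_total x t0 with h | h
      · exact hposA x (Finset.mem_Icc.mpr ⟨hx.1, h⟩)
      · exact hposB x (Finset.mem_Icc.mpr ⟨h, hx.2⟩)
    have hIne : (Finset.Icc s e).Nonempty := Finset.nonempty_Icc.mpr hse
    set m := (Finset.Icc s e).inf' hIne v with hmdef
    have hm : 0 < m := by
      rw [hmdef, Finset.lt_inf'_iff]
      exact hpos
    have hmle : ∀ x ∈ Finset.Icc s e, m ≤ v x := fun x hx => Finset.inf'_le v hx
    obtain ⟨t1, ht1mem, ht1eq⟩ := Finset.exists_mem_eq_inf' hIne v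
    -- the residual sequence
    set w : ℕ → ℝ := fun t => v t - (if t ∈ Finset.Icc s e then m else 0) with hwdef
    have hw0 : w 0 = 0 := by
      have : (0 : ℕ) ∉ Finset.Icc s e := by
        rw [Finset.mem_Icc]; omega
      simp only [hwdef]
      rw [if_neg this, h0, sub_zero]
    have hwT1 : w (T + 1) = 0 := by
      have : T + 1 ∉ Finset.Icc s e := by
        rw [Finset.mem_Icc]; omega
      simp only [hwdef]
      rw [if_neg this, hT1, sub_zero]
    have hwv : ∀ t, w t ≤ v t := by
      intro t
      rw [hwdef]
      simp only
      split <;> linarith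
    have hwnn : ∀ t ∈ Finset.Icc 1 T, 0 ≤ w t := by
      intro t ht
      rw [hwdef]
      simp only
      split_ifs with hmem
      · linarith [hmle t hmem]
      · linarith [hv t ht]
    -- support card decreases
    have hsub : (Finset.Icc 1 T).filter (fun t => 0 < w t) ⊆ S := by
      intro t ht
      rw [Finset.mem_filter] at ht
      exact Finset.mem_filter.mpr ⟨ht.1, lt_of_lt_of_le ht.2 (hwv t)⟩
    have ht1T : t1 ∈ Finset.Icc 1 T := by
      rw [Finset.mem_Icc] at ht1mem ⊢
      omega
    have ht1S : t1 ∈ S := Finset.mem_filter.mpr ⟨ht1T, by rw [← ht1eq]; exact hm⟩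
    have ht1notW : t1 ∉ (Finset.Icc 1 T).filter (fun t => 0 < w t) := by
      rw [Finset.mem_filter]
      push_neg
      intro _
      rw [hwdef]
      simp only [ht1mem, if_pos]
      rw [← ht1eq]
      simp
      exact ⟨t1, Finset.mem_Icc.mp ht1mem, le_of_eq (by rw [hmdef, ht1eq])⟩
    have hcard' : ((Finset.Icc 1 T).filter (fun t => 0 < w t)).card ≤ n := by
      have : ((Finset.Icc 1 T).filter (fun t => 0 < w t)).card < S.card :=
        Finset.card_lt_card ((Finset.ssubset_iff_of_subset hsub).mpr ⟨t1, ht1S, ht1notW⟩)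
      omega
    obtain ⟨N, s', e', a', hk', hval', hsum'⟩ := ih T w hwnn hw0 hwT1 hcard'
    -- build new decomposition
    refine ⟨N + 1,
      (fun k => if k = N + 1 then s else s' k),
      (fun k => if k = N + 1 then e else e' k),
      (fun k => if k = N + 1 then m else a' k), ?_, ?_, ?_⟩
    · intro k hk
      rw [Finset.mem_Icc] at hk
      by_cases h : k = N + 1
      · simp only [h, if_pos rfl]
        exact ⟨hm, hs1, hse, heT⟩
      · simp only [if_neg h]
        exact hk' k (Finset.mem_Icc.mpr ⟨hk.1, by omega⟩)
    · intro t ht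
      rw [Finset.sum_Icc_succ_top (by omega : 1 ≤ N + 1)]
      simp only [if_pos rfl]
      have hcongr : ∀ k ∈ Finset.Icc 1 N,
          (if k = N + 1 then m else a' k) *
            (if t ∈ Finset.Icc (if k = N + 1 then s else s' k) (if k = N + 1 then e else e' k)
              then (1 : ℝ) else 0) =
          a' k * (if t ∈ Finset.Icc (s' k) (e' k) then (1 : ℝ) else 0) := by
        intro k hk
        rw [Finset.mem_Icc] at hk
        have : k ≠ N + 1 := by omega
        simp [this]
      rw [Finset.sum_congr rfl hcongr, ← hval' t ht]
      rw [hwdef]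
      simp only
      split_ifs <;> ring
    · rw [Finset.sum_Icc_succ_top (by omega : 1 ≤ N + 1)]
      simp only [if_pos rfl]
      have hcongr : ∀ k ∈ Finset.Icc 1 N,
          (if k = N + 1 then m else a' k) = a' k := by
        intro k hk
        rw [Finset.mem_Icc] at hk
        have : k ≠ N + 1 := by omega
        simp [this]
      rw [Finset.sum_congr rfl hcongr, hsum']
      have key : ∀ t ∈ Finset.Icc 1 (T + 1),
          max (v t - v (t - 1)) 0 =
            max (w t - w (t - 1)) 0 + (if t = s then m else 0) := by
        intro t ht
        rw [Finset.mem_Icc] at ht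
        have hwin : ∀ x, x ∈ Finset.Icc s e → w x = v x - m := by
          intro x hx
          rw [hwdef]
          simp only
          rw [if_pos hx, ]
        have hwout : ∀ x, x ∉ Finset.Icc s e → w x = v x := by
          intro x hx
          rw [hwdef]
          simp only
          rw [if_neg hx, sub_zero]
        by_cases hts : t = s
        · rw [if_pos hts]
          have h1 : t ∈ Finset.Icc s e := Finset.mem_Icc.mpr ⟨hts.ge, hts.le.trans hse⟩
          have h2 : t - 1 ∉ Finset.Icc s e := by rw [Finset.mem_Icc]; omega
          have hvt0 : v (t - 1) = 0 := by rw [hts]; exact hvs0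
          rw [hwin t h1, hwout _ h2, hvt0]
          have hvspos : 0 < v t := hpos t h1
          have hms : m ≤ v t := hmle t h1
          rw [max_eq_left (by linarith), max_eq_left (by linarith)]
          ring
        · rw [if_neg hts, add_zero]
          by_cases h1 : t ∈ Finset.Icc s e
          · have hmm := Finset.mem_Icc.mp h1
            have ht' : t - 1 ∈ Finset.Icc s e := by
              rw [Finset.mem_Icc]
              omega
            rw [hwin t h1, hwin _ ht']
            ring_nf
          · rw [Finset.mem_Icc] at h1
            push_neg at h1
            by_cases h2 : t = e + 1
            · have ht' : t - 1 ∈ Finset.Icc s e := by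
                rw [Finset.mem_Icc]; omega
              have ht'' : t ∉ Finset.Icc s e := by rw [Finset.mem_Icc]; omega
              have htm1 : t - 1 = e := by omega
              have hvte : v (t - 1) = v e := by rw [htm1]
              have hvt : v t = 0 := by rw [h2]; exact hve0
              rw [hwout t ht'', hwin _ ht', hvt, hvte]
              have hme : m ≤ v e := hmle e (Finset.mem_Icc.mpr ⟨hse, le_rfl⟩)
              rw [max_eq_right (by linarith), max_eq_right (by linarith)]
            · have ht' : t - 1 ∉ Finset.Icc s e := by
                rw [Finset.mem_Icc]
                omega
              have ht'' : t ∉ Finset.Icc s e := by rw [Finset.mem_Icc]; omega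
              rw [hwout t ht'', hwout _ ht']
      rw [Finset.sum_congr rfl key, Finset.sum_add_distrib, Finset.sum_ite_eq' _ s (fun _ => m)]
      have hsmem : s ∈ Finset.Icc 1 (T + 1) := Finset.mem_Icc.mpr ⟨hs1, by omega⟩
      rw [if_pos hsmem]
      simp

theorem interval_decomposition (T : ℕ) (v : ℕ → ℝ)
    (hv : ∀ t ∈ Finset.Icc 1 T, 0 ≤ v t) (h0 : v 0 = 0) (hT1 : v (T + 1) = 0) :
    ∃ (N : ℕ) (s e : ℕ → ℕ) (a : ℕ → ℝ),
      (∀ k ∈ Finset.Icc 1 N, 0 < a k ∧ 1 ≤ s k ∧ s k ≤ e k ∧ e k ≤ T) ∧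
      (∀ t ∈ Finset.Icc 1 T,
        v t = ∑ k ∈ Finset.Icc 1 N,
          a k * (if t ∈ Finset.Icc (s k) (e k) then (1 : ℝ) else 0)) ∧
      ∑ k ∈ Finset.Icc 1 N, a k =
        ∑ t ∈ Finset.Icc 1 (T + 1), max (v t - v (t - 1)) 0 := by
  exact intdec_aux ((Finset.Icc 1 T).filter (fun t => 0 < v t)).card T v hv h0 hT1 le_rfl
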